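/- The braid group Br_n (with n ≥ 2) admits a presentation with two generators σ₁ and σ, subject to the relations σ₁σⁱσ₁σ⁻ⁱ = σⁱσ₁σ⁻ⁱσ₁ for all i with 2 ≤ i ≤ n/2, and σⁿ = (σσ₁)ⁿ⁻¹. That is, the presented group on two generators with these relations is isomorphic to Br_n, via the map sending σ₁ to the standard Artin generator σ₁ and σ to the product σ₁σ₂⋯σ_{n-1}. -/

import Mathlib

/-- The standard Artin relators for the braid group `Br n`, with generators
`σ_{i+1}` indexed by `i : Fin (n-1)`. -/
def braidRels (n : ℕ) : Set (FreeGroup (Fin (n - 1))) :=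
  {r | ∃ i j : Fin (n - 1), (i : ℕ) + 1 < (j : ℕ) ∧
      r = .of i * .of j * (.of i)⁻¹ * (.of j)⁻¹} ∪
  {r | ∃ (i : ℕ) (h : i + 1 < n - 1),
      r = .of ⟨i, by omega⟩ * .of ⟨i + 1, h⟩ * .of ⟨i, by omega⟩ *
        (.of ⟨i + 1, h⟩ * .of ⟨i, by omega⟩ * .of ⟨i + 1, h⟩)⁻¹}

/-- Artin's two-generator relators: generator `true` is `σ₁`, generator `false` is `σ`. -/
def artinTwoGenRels (n : ℕ) : Set (FreeGroup Bool) :=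
  {r | ∃ i : ℕ, 2 ≤ i ∧ i ≤ n / 2 ∧
      r = .of true * (.of false) ^ i * .of true * ((.of false : FreeGroup Bool) ^ i)⁻¹ *
        ((.of false : FreeGroup Bool) ^ i * .of true * ((.of false : FreeGroup Bool) ^ i)⁻¹ *
          .of true)⁻¹} ∪
  {(.of false : FreeGroup Bool) ^ n * ((.of false * .of true : FreeGroup Bool) ^ (n - 1))⁻¹}

namespace ArtinAux

variable {G : Type*} [Group G]

/-- partial product σ 0 * σ 1 * ⋯ * σ (k-1) -/
def dP (σ : ℕ → G) (k : ℕ) : G := ((List.range k).map σ).prod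

@[simp] lemma dP_zero (σ : ℕ → G) : dP σ 0 = 1 := rfl

lemma dP_succ (σ : ℕ → G) (k : ℕ) : dP σ (k + 1) = dP σ k * σ k := by
  simp [dP, List.range_succ]

@[simp] lemma dP_one (σ : ℕ → G) : dP σ 1 = σ 0 := by simp [dP_succ]

section
variable {m : ℕ} {σ : ℕ → G}
  (hc : ∀ i j, i + 1 < j → j < m → Commute (σ i) (σ j))
  (hb : ∀ i, i + 1 < m → σ i * σ (i+1) * σ i = σ (i+1) * σ i * σ (i+1))

include hc in
lemma dP_comm : ∀ i j, i < j → j < m → Commute (dP σ i) (σ j) := by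
  intro i
  induction i with
  | zero => intro j _ _; simp [Commute.one_left]
  | succ i ih =>
    intro j hij hjm
    rw [dP_succ]
    exact (ih j (by omega) hjm).mul_left (hc i j (by omega) hjm)

include hc hb in
lemma dP_shift : ∀ k i, i + 2 ≤ k → k ≤ m → dP σ k * σ i = σ (i+1) * dP σ k := by
  intro k
  induction k with
  | zero => omega
  | succ k ih =>
    intro i hik hkm
    rcases Nat.lt_or_ge (i + 2) (k + 1) with h | h
    · rw [dP_succ, mul_assoc, ((hc i k (by omega) (by omega)).symm).eq, ← mul_assoc,
        ih i (by omega) (by omega), mul_assoc]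
    · have hk : k = i + 1 := by omega
      subst hk
      have h1 : Commute (dP σ i) (σ (i+1)) := dP_comm hc i (i+1) (by omega) (by omega)
      calc dP σ (i+1+1) * σ i = dP σ i * (σ i * σ (i+1) * σ i) := by
            rw [dP_succ, dP_succ]; group
        _ = dP σ i * (σ (i+1) * σ i * σ (i+1)) := by rw [hb i (by omega)]
        _ = σ (i+1) * dP σ (i+1+1) := by
            simp only [dP_succ, mul_assoc]; rw [h1.left_comm]

include hc hb in
lemma dP_shiftpow : ∀ k, k ≤ m - 1 → dP σ m ^ k * σ 0 = σ k * dP σ m ^ k := by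
  intro k
  induction k with
  | zero => simp
  | succ k ih =>
    intro hk
    have hm : 1 ≤ m := by omega
    have step : dP σ m ^ (k+1) * σ 0 = dP σ m * (σ k * dP σ m ^ k) := by
      rw [pow_succ', mul_assoc, ih (by omega)]
    rw [step, ← mul_assoc, dP_shift hc hb m k (by omega) le_rfl, pow_succ', mul_assoc]

include hc hb in
lemma dP_claimA : ∀ k, k + 1 ≤ m →
    dP σ (k+1) * dP σ (k+1) * σ k = σ 0 * (dP σ (k+1) * dP σ (k+1)) := by
  intro k
  induction k with
  | zero => simp [mul_assoc]
  | succ k ih =>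
    intro hk
    have hcomm : Commute (dP σ k) (σ (k+1)) := dP_comm hc k (k+1) (by omega) (by omega)
    have key : ∀ x : G, σ (k+1) * (dP σ (k+1) * x) = dP σ k * (σ (k+1) * (σ k * x)) := by
      intro x
      rw [dP_succ, ← mul_assoc, ← mul_assoc, ← hcomm.eq, mul_assoc, mul_assoc]
    have hbr : ∀ x : G, σ k * (σ (k+1) * (σ k * x)) = σ (k+1) * (σ k * (σ (k+1) * x)) := by
      intro x
      have h3 := hb k (by omega)
      rw [← mul_assoc, ← mul_assoc, h3, mul_assoc, mul_assoc]
    have hb3 : σ k * (σ (k+1) * σ k) = σ (k+1) * (σ k * σ (k+1)) := by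
      rw [← mul_assoc, hb k (by omega), mul_assoc]
    have ih' : ∀ x : G, σ 0 * (dP σ (k+1) * (dP σ (k+1) * x))
        = dP σ (k+1) * (dP σ (k+1) * (σ k * x)) := by
      intro x
      have h := ih (by omega)
      calc σ 0 * (dP σ (k+1) * (dP σ (k+1) * x))
          = σ 0 * (dP σ (k+1) * dP σ (k+1)) * x := by group
        _ = dP σ (k+1) * dP σ (k+1) * σ k * x := by rw [← h]
        _ = dP σ (k+1) * (dP σ (k+1) * (σ k * x)) := by group
    have lhs : dP σ (k+1) * σ (k+1) * (dP σ (k+1) * σ (k+1)) * σ (k+1)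
        = dP σ (k+1) * (dP σ (k+1) * (σ k * (σ (k+1) * σ k))) := by
      calc dP σ (k+1) * σ (k+1) * (dP σ (k+1) * σ (k+1)) * σ (k+1)
          = dP σ (k+1) * (σ (k+1) * (dP σ (k+1) * (σ (k+1) * σ (k+1)))) := by group
        _ = dP σ (k+1) * (dP σ k * (σ (k+1) * (σ k * (σ (k+1) * σ (k+1))))) := by rw [key]
        _ = dP σ (k+1) * (dP σ k * (σ k * (σ (k+1) * (σ k * σ (k+1))))) := by
            rw [← hbr (σ (k+1))]
        _ = dP σ (k+1) * (dP σ (k+1) * (σ (k+1) * (σ k * σ (k+1)))) := by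
            simp only [dP_succ, mul_assoc]
        _ = dP σ (k+1) * (dP σ (k+1) * (σ k * (σ (k+1) * σ k))) := by rw [← hb3]
    have rhs : σ 0 * (dP σ (k+1) * σ (k+1) * (dP σ (k+1) * σ (k+1)))
        = dP σ (k+1) * (dP σ (k+1) * (σ k * (σ (k+1) * σ k))) := by
      calc σ 0 * (dP σ (k+1) * σ (k+1) * (dP σ (k+1) * σ (k+1)))
          = σ 0 * (dP σ (k+1) * (σ (k+1) * (dP σ (k+1) * σ (k+1)))) := by group
        _ = σ 0 * (dP σ (k+1) * (dP σ k * (σ (k+1) * (σ k * σ (k+1))))) := by rw [key]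
        _ = σ 0 * (dP σ (k+1) * (dP σ k * (σ k * (σ (k+1) * σ k)))) := by rw [← hb3]
        _ = σ 0 * (dP σ (k+1) * (dP σ (k+1) * (σ (k+1) * σ k))) := by
            simp only [dP_succ, mul_assoc]
        _ = dP σ (k+1) * (dP σ (k+1) * (σ k * (σ (k+1) * σ k))) := by rw [ih']
    rw [dP_succ, lhs, rhs]

include hc hb in
lemma dP_central (hm : 1 ≤ m) : dP σ m ^ (m + 1) * σ 0 = σ 0 * dP σ m ^ (m + 1) := by
  have h1 : dP σ m ^ (m + 1) * σ 0 = dP σ m ^ 2 * (σ (m-1) * dP σ m ^ (m-1)) := by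
    rw [← dP_shiftpow hc hb (m-1) le_rfl, ← mul_assoc, ← pow_add]
    congr 2
    omega
  have h2 : dP σ m ^ 2 * σ (m - 1) = σ 0 * dP σ m ^ 2 := by
    have h := dP_claimA hc hb (m - 1) (by omega)
    rw [show m - 1 + 1 = m by omega] at h
    rw [pow_two]
    exact h
  rw [h1, ← mul_assoc, h2, mul_assoc, ← pow_add]
  congr 2
  omega

/-- partial product σ 1 * ⋯ * σ k -/
def eP (σ : ℕ → G) (k : ℕ) : G := ((List.range k).map (fun j => σ (j+1))).prod

@[simp] lemma eP_zero (σ : ℕ → G) : eP σ 0 = 1 := rfl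

lemma eP_succ (σ : ℕ → G) (k : ℕ) : eP σ (k + 1) = eP σ k * σ (k+1) := by
  simp [eP, List.range_succ]

lemma dP_eq_sigma0_eP (σ : ℕ → G) : ∀ k, dP σ (k+1) = σ 0 * eP σ k := by
  intro k
  induction k with
  | zero => simp
  | succ k ih => rw [dP_succ, ih, eP_succ, mul_assoc]

include hc hb in
lemma dP_prodpow : ∀ k, k ≤ m - 1 → (dP σ m * σ 0) ^ k = eP σ k * dP σ m ^ k := by
  intro k
  induction k with
  | zero => simp
  | succ k ih =>
    intro hk
    rw [pow_succ, ih (by omega)]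
    calc eP σ k * dP σ m ^ k * (dP σ m * σ 0)
        = eP σ k * (dP σ m ^ (k+1) * σ 0) := by rw [pow_succ]; group
      _ = eP σ k * (σ (k+1) * dP σ m ^ (k+1)) := by rw [dP_shiftpow hc hb (k+1) hk]
      _ = eP σ (k+1) * dP σ m ^ (k+1) := by rw [eP_succ]; group

include hc hb in
lemma dP_final (hm : 1 ≤ m) : (dP σ m * σ 0) ^ m = dP σ m ^ (m + 1) := by
  have h2 : σ 0 * eP σ (m-1) = dP σ m := by
    rw [← dP_eq_sigma0_eP σ (m-1)]; congr 1; omega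
  have hcen := dP_central hc hb hm
  calc (dP σ m * σ 0) ^ m = (dP σ m * σ 0) ^ (m-1) * (dP σ m * σ 0) := by
        rw [← pow_succ]; congr 1; omega
    _ = eP σ (m-1) * dP σ m ^ (m-1) * (dP σ m * σ 0) := by rw [dP_prodpow hc hb (m-1) le_rfl]
    _ = eP σ (m-1) * (dP σ m ^ m * σ 0) := by
        have h4 : dP σ m ^ (m-1) * dP σ m = dP σ m ^ m := by
          rw [← pow_succ]; congr 1; omega
        rw [mul_assoc, ← mul_assoc (dP σ m ^ (m-1)), h4]
    _ = (σ 0)⁻¹ * (σ 0 * eP σ (m-1)) * (dP σ m ^ m * σ 0) := by group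
    _ = (σ 0)⁻¹ * dP σ m * (dP σ m ^ m * σ 0) := by rw [h2]
    _ = (σ 0)⁻¹ * (dP σ m ^ (m+1) * σ 0) := by rw [pow_succ']; group
    _ = (σ 0)⁻¹ * (σ 0 * dP σ m ^ (m+1)) := by rw [hcen]
    _ = dP σ m ^ (m+1) := by group

end
end ArtinAux

namespace ArtinAux2

variable {G : Type*} [Group G]

/-- `tE a s i = s^i a s^{-i}` -/
def tE (a s : G) (i : ℕ) : G := s ^ i * a * (s ^ i)⁻¹

@[simp] lemma tE_zero (a s : G) : tE a s 0 = a := by simp [tE]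

lemma conj_tE (a s : G) (j i : ℕ) : s ^ j * tE a s i * (s ^ j)⁻¹ = tE a s (j + i) := by
  simp only [tE, pow_add, mul_inv_rev]
  group

section
variable {n : ℕ} {a s : G}
  (hn : 2 ≤ n)
  (H1 : ∀ i, 2 ≤ i → i ≤ n / 2 → Commute a (tE a s i))
  (H2 : s ^ n = (s * a) ^ (n - 1))

include H2 in
lemma central : Commute (s ^ n) a := by
  have h1 : Commute (s ^ n) s := (Commute.refl s).pow_left n
  have h2 : Commute (s ^ n) (s * a) := by
    rw [H2]; exact (Commute.refl (s * a)).pow_left (n - 1)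
  have h3 : Commute (s ^ n) (s⁻¹ * (s * a)) := (h1.inv_right).mul_right h2
  simpa using h3

include H2 in
lemma tE_n : tE a s n = a := by
  rw [tE, (central H2).eq, mul_inv_cancel_right]

include H2 in
lemma tE_periodic (i : ℕ) : tE a s (i + n) = tE a s i := by
  rw [← conj_tE a s i n, tE_n H2, tE]

include H1 H2 in
lemma comm0 : ∀ k, 2 ≤ k → k ≤ n - 2 → Commute a (tE a s k) := by
  intro k hk2 hkn
  rcases le_or_gt k (n / 2) with h | h
  · exact H1 k hk2 h
  · have hk' : 2 ≤ n - k ∧ n - k ≤ n / 2 := by omega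
    have hcm := (H1 (n - k) hk'.1 hk'.2).map (MulAut.conj (s ^ k))
    simp only [MulAut.conj_apply] at hcm
    rw [conj_tE a s k (n - k), show k + (n - k) = 0 + n by omega, tE_periodic H2, tE_zero] at hcm
    have : s ^ k * a * (s ^ k)⁻¹ = tE a s k := rfl
    rw [this] at hcm
    exact hcm.symm

include H1 H2 in
lemma commk : ∀ i k, 2 ≤ k → k ≤ n - 2 → Commute (tE a s i) (tE a s (i + k)) := by
  intro i k hk2 hkn
  have h := (comm0 H1 H2 k hk2 hkn).map (MulAut.conj (s ^ i))
  simp only [MulAut.conj_apply] at h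
  rw [conj_tE a s i k] at h
  have : s ^ i * a * (s ^ i)⁻¹ = tE a s i := rfl
  rw [this] at h
  exact h

/-- `uP a s k = t 1 * t 2 * ⋯ * t k` -/
def uP (a s : G) (k : ℕ) : G := ((List.range k).map (fun j => tE a s (j + 1))).prod

@[simp] lemma uP_zero (a s : G) : uP a s 0 = 1 := rfl

lemma uP_succ (a s : G) (k : ℕ) : uP a s (k + 1) = uP a s k * tE a s (k + 1) := by
  simp [uP, List.range_succ]

lemma sa_pow (a s : G) : ∀ k, (s * a) ^ k = uP a s k * s ^ k := by
  intro k
  induction k with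
  | zero => simp
  | succ k ih =>
    rw [pow_succ, ih]
    calc uP a s k * s ^ k * (s * a)
        = uP a s k * (s ^ (k+1) * a * (s ^ (k+1))⁻¹ * s ^ (k+1)) := by
          rw [pow_succ]; group
      _ = uP a s (k+1) * s ^ (k+1) := by rw [uP_succ, tE]; group

include hn H2 in
lemma s_eq_uP : s = uP a s (n - 1) := by
  have h : s * s ^ (n - 1) = uP a s (n - 1) * s ^ (n - 1) := by
    rw [← sa_pow a s (n - 1), ← H2, ← pow_succ']
    congr 1
    omega
  exact mul_right_cancel h

/-- `vP a s k = t 0 * t 1 * ⋯ * t (k-1)` -/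
def vP (a s : G) (k : ℕ) : G := ((List.range k).map (tE a s)).prod

@[simp] lemma vP_zero (a s : G) : vP a s 0 = 1 := rfl

lemma vP_succ (a s : G) (k : ℕ) : vP a s (k + 1) = vP a s k * tE a s k := by
  simp [vP, List.range_succ]

lemma conj_vP (a s : G) : ∀ k, s * vP a s k * s⁻¹ = uP a s k := by
  intro k
  induction k with
  | zero => simp
  | succ k ih =>
    have h1 : s * tE a s k * s⁻¹ = tE a s (k + 1) := by
      have := conj_tE a s 1 k
      rw [pow_one] at this
      rw [this, Nat.add_comm]
    calc s * vP a s (k+1) * s⁻¹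
        = (s * vP a s k * s⁻¹) * (s * tE a s k * s⁻¹) := by rw [vP_succ]; group
      _ = uP a s (k+1) := by rw [ih, h1, uP_succ]

include hn H2 in
lemma s_eq_vP : s = vP a s (n - 1) := by
  have h := conj_vP a s (n - 1)
  rw [← s_eq_uP hn H2] at h
  have h2 : vP a s (n-1) = s⁻¹ * (s * vP a s (n-1) * s⁻¹) * s := by group
  rw [h] at h2
  rw [h2]; group

lemma vP_split (a s : G) : ∀ k, vP a s (k + 2)
    = a * (tE a s 1 * ((List.range k).map (fun j => tE a s (j + 2))).prod) := by
  intro k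
  induction k with
  | zero => simp [vP_succ, mul_assoc]
  | succ k ih =>
    rw [show k + 1 + 2 = (k + 2) + 1 by omega, vP_succ, ih, List.range_succ]
    simp only [List.map_append, List.prod_append, List.map_cons, List.prod_cons,
      List.map_nil, List.prod_nil, mul_one]
    simp only [mul_assoc]

include hn H1 H2 in
lemma braid0 (hn3 : 3 ≤ n) : a * tE a s 1 * a = tE a s 1 * a * tE a s 1 := by
  set w : G := ((List.range (n - 3)).map (fun j => tE a s (j + 2))).prod with hw
  have hcw : Commute a w := by
    apply Commute.list_prod_right
    intro x hx
    simp only [List.mem_map, List.mem_range] at hx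
    obtain ⟨j, hj, rfl⟩ := hx
    exact comm0 H1 H2 (j + 2) (by omega) (by omega)
  have hsplit : vP a s (n - 1) = a * (tE a s 1 * w) := by
    rw [← vP_split a s (n - 3), show n - 3 + 2 = n - 1 by omega]
  have e1 : tE a s 1 * (a * (tE a s 1 * w)) = a * (tE a s 1 * w) * a := by
    rw [← hsplit, ← s_eq_vP hn H2, tE, pow_one]; group
  have e2 : tE a s 1 * a * tE a s 1 * w = a * tE a s 1 * a * w := by
    calc tE a s 1 * a * tE a s 1 * w = tE a s 1 * (a * (tE a s 1 * w)) := by group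
      _ = a * (tE a s 1 * w) * a := e1
      _ = a * tE a s 1 * (w * a) := by group
      _ = a * tE a s 1 * (a * w) := by rw [← hcw.eq]
      _ = a * tE a s 1 * a * w := by group
  exact (mul_right_cancel e2).symm

include hn H1 H2 in
lemma braidk (hn3 : 3 ≤ n) (i : ℕ) :
    tE a s i * tE a s (i + 1) * tE a s i
      = tE a s (i + 1) * tE a s i * tE a s (i + 1) := by
  have h := congrArg (MulAut.conj (s ^ i)) (braid0 hn H1 H2 hn3)
  simp only [map_mul, MulAut.conj_apply] at h
  have h0 : s ^ i * a * (s ^ i)⁻¹ = tE a s i := rfl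
  have h1 : s ^ i * tE a s 1 * (s ^ i)⁻¹ = tE a s (i + 1) := conj_tE a s i 1
  rw [h0, h1] at h
  exact h

end
end ArtinAux2

namespace ArtinAux

lemma presented_rel {α : Type*} {rels : Set (FreeGroup α)} {r : FreeGroup α} (h : r ∈ rels) :
    (PresentedGroup.mk rels) r = 1 := by
  have : r ∈ Subgroup.normalClosure rels := Subgroup.subset_normalClosure h
  exact (QuotientGroup.eq_one_iff r).mpr this

lemma commute_of_commutator_eq_one {G : Type*} [Group G] {x y : G}
    (h : x * y * x⁻¹ * y⁻¹ = 1) : Commute x y := by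
  have h2 : x * y = (x * y * x⁻¹ * y⁻¹) * (y * x) := by group
  rw [h, one_mul] at h2
  exact h2

variable {G : Type*} [Group G]

lemma map_dP {H : Type*} [Group H] (F : G →* H) (σ : ℕ → G) (k : ℕ) :
    F (dP σ k) = dP (fun j => F (σ j)) k := by
  simp [dP, map_list_prod, List.map_map, Function.comp_def]

lemma dP_congr {σ τ : ℕ → G} (k : ℕ) (h : ∀ j < k, σ j = τ j) : dP σ k = dP τ k := by
  unfold dP
  congr 1
  apply List.map_congr_left
  intro x hx
  exact h x (List.mem_range.mp hx)

lemma ofFn_prod_eq_dP (g : ℕ → G) : ∀ k, (List.ofFn (fun i : Fin k => g i)).prod = dP g k := by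
  intro k
  induction k with
  | zero => simp
  | succ k ih =>
    rw [List.ofFn_succ', List.concat_eq_append, List.prod_append, dP_succ, ← ih]
    simp

end ArtinAux

namespace ArtinMain
open ArtinAux ArtinAux2

variable (n : ℕ)

abbrev B (n : ℕ) := PresentedGroup (braidRels n)
abbrev T (n : ℕ) := PresentedGroup (artinTwoGenRels n)

lemma mk_of {α : Type*} {rels : Set (FreeGroup α)} (x : α) :
    PresentedGroup.mk rels (FreeGroup.of x) = PresentedGroup.of x := rfl

/-- the braid generators, as a function on ℕ -/
def σB (i : ℕ) : B n := if h : i < n - 1 then PresentedGroup.of ⟨i, h⟩ else 1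

lemma σB_eq (i : ℕ) (h : i < n - 1) : σB n i = PresentedGroup.of ⟨i, h⟩ := dif_pos h

lemma hcB : ∀ i j, i + 1 < j → j < n - 1 → Commute (σB n i) (σB n j) := by
  intro i j hij hj
  rw [σB_eq n i (by omega), σB_eq n j hj]
  apply commute_of_commutator_eq_one
  have hr : (FreeGroup.of ⟨i, by omega⟩ * FreeGroup.of ⟨j, hj⟩ * (FreeGroup.of ⟨i, by omega⟩)⁻¹ *
      (FreeGroup.of ⟨j, hj⟩)⁻¹ : FreeGroup (Fin (n-1))) ∈ braidRels n :=
    Or.inl ⟨⟨i, by omega⟩, ⟨j, hj⟩, hij, rfl⟩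
  have h1 := presented_rel hr
  simpa only [map_mul, map_inv, mk_of] using h1

lemma hbB : ∀ i, i + 1 < n - 1 →
    σB n i * σB n (i+1) * σB n i = σB n (i+1) * σB n i * σB n (i+1) := by
  intro i hi
  rw [σB_eq n i (by omega), σB_eq n (i+1) hi]
  have hr : (FreeGroup.of ⟨i, by omega⟩ * FreeGroup.of ⟨i+1, hi⟩ * FreeGroup.of ⟨i, by omega⟩ *
      (FreeGroup.of ⟨i+1, hi⟩ * FreeGroup.of ⟨i, by omega⟩ * FreeGroup.of ⟨i+1, hi⟩)⁻¹ :
      FreeGroup (Fin (n-1))) ∈ braidRels n :=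
    Or.inr ⟨i, hi, rfl⟩
  have h1 := presented_rel hr
  simp only [map_mul, map_inv, mk_of] at h1
  rw [mul_inv_eq_one] at h1
  exact h1

/-- generator map for φ : T n → B n -/
def fB : Bool → B n := fun b => cond b (σB n 0) (dP (σB n) (n - 1))

lemma conj_comm_helper {G : Type*} [Group G] {A X Dp : G} (h : Commute A X)
    (hD : Dp * A = X * Dp) :
    A * Dp * A * Dp⁻¹ * (Dp * A * Dp⁻¹ * A)⁻¹ = 1 := by
  have h1 : Dp * A * Dp⁻¹ = X := by rw [hD]; group
  have h2 : A * Dp * A * Dp⁻¹ = A * X := by rw [← h1]; group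
  rw [h2, h1, h.eq]
  group

lemma hφ (hn : 2 ≤ n) : ∀ r ∈ artinTwoGenRels n, FreeGroup.lift (fB n) r = 1 := by
  intro r hr
  rcases hr with ⟨i, hi2, hin, rfl⟩ | hr
  · simp only [map_mul, map_inv, map_pow, FreeGroup.lift_apply_of, fB, cond_true, cond_false]
    exact conj_comm_helper (hcB n 0 i (by omega) (by omega))
      (dP_shiftpow (hcB n) (hbB n) i (by omega))
  · rw [Set.mem_singleton_iff] at hr
    subst hr
    simp only [map_mul, map_inv, map_pow, FreeGroup.lift_apply_of, fB, cond_true, cond_false]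
    rw [mul_inv_eq_one, dP_final (hcB n) (hbB n) (show 1 ≤ n - 1 by omega)]
    congr 1
    omega

def phi (hn : 2 ≤ n) : T n →* B n := PresentedGroup.toGroup (hφ n hn)

/-- generators of the two-generator group -/
def aT : T n := PresentedGroup.of true
def sT : T n := PresentedGroup.of false

lemma H1T : ∀ i, 2 ≤ i → i ≤ n / 2 → Commute (aT n) (tE (aT n) (sT n) i) := by
  intro i hi2 hin
  have hr : (FreeGroup.of true * (FreeGroup.of false) ^ i * FreeGroup.of true *
      ((FreeGroup.of false : FreeGroup Bool) ^ i)⁻¹ *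
      ((FreeGroup.of false : FreeGroup Bool) ^ i * FreeGroup.of true *
        ((FreeGroup.of false : FreeGroup Bool) ^ i)⁻¹ * FreeGroup.of true)⁻¹ :
      FreeGroup Bool) ∈ artinTwoGenRels n := Or.inl ⟨i, hi2, hin, rfl⟩
  have h1 := presented_rel hr
  simp only [map_mul, map_inv, map_pow, mk_of] at h1
  rw [mul_inv_eq_one] at h1
  have h' : aT n * (sT n ^ i * aT n * (sT n ^ i)⁻¹) = (sT n ^ i * aT n * (sT n ^ i)⁻¹) * aT n := by
    calc aT n * (sT n ^ i * aT n * (sT n ^ i)⁻¹)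
        = aT n * sT n ^ i * aT n * (sT n ^ i)⁻¹ := by group
      _ = sT n ^ i * aT n * (sT n ^ i)⁻¹ * aT n := h1
  exact h'

lemma H2T : sT n ^ n = (sT n * aT n) ^ (n - 1) := by
  have hr : ((FreeGroup.of false : FreeGroup Bool) ^ n *
      ((FreeGroup.of false * FreeGroup.of true : FreeGroup Bool) ^ (n - 1))⁻¹ :
      FreeGroup Bool) ∈ artinTwoGenRels n := Or.inr rfl
  have h1 := presented_rel hr
  simp only [map_mul, map_inv, map_pow, mk_of] at h1
  rw [mul_inv_eq_one] at h1
  exact h1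

lemma hψ (hn : 2 ≤ n) : ∀ r ∈ braidRels n,
    FreeGroup.lift (fun i : Fin (n-1) => tE (aT n) (sT n) i.val) r = 1 := by
  intro r hr
  rcases hr with ⟨i, j, hij, rfl⟩ | ⟨i, hi, rfl⟩
  · simp only [map_mul, map_inv, FreeGroup.lift_apply_of]
    have hc : Commute (tE (aT n) (sT n) i.val) (tE (aT n) (sT n) j.val) := by
      rw [show (j : ℕ) = (i : ℕ) + ((j : ℕ) - (i : ℕ)) by omega]
      exact commk (H1T n) (H2T n) i.val ((j:ℕ) - (i:ℕ)) (by omega) (by omega)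
    rw [hc.eq]
    group
  · simp only [map_mul, map_inv, FreeGroup.lift_apply_of]
    rw [mul_inv_eq_one]
    exact braidk (by omega) (H1T n) (H2T n) (by omega) i

def psi (hn : 2 ≤ n) : B n →* T n := PresentedGroup.toGroup (hψ n hn)

lemma psi_phi (hn : 2 ≤ n) : (psi n hn).comp (phi n hn) = MonoidHom.id (T n) := by
  apply PresentedGroup.ext
  intro x
  cases x
  · -- false : goes to dP σB (n-1), then to vP = s
    simp only [MonoidHom.comp_apply, MonoidHom.id_apply]
    rw [phi, PresentedGroup.toGroup.of]
    simp only [fB, cond_false]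
    rw [map_dP]
    have he : dP (fun j => psi n hn (σB n j)) (n-1) = dP (tE (aT n) (sT n)) (n-1) := by
      apply dP_congr
      intro j hj
      rw [σB_eq n j hj, psi, PresentedGroup.toGroup.of]
    rw [he]
    have : dP (tE (aT n) (sT n)) (n-1) = vP (aT n) (sT n) (n-1) := rfl
    rw [this, ← s_eq_vP hn (H2T n)]
    rfl
  · simp only [MonoidHom.comp_apply, MonoidHom.id_apply]
    rw [phi, PresentedGroup.toGroup.of]
    simp only [fB, cond_true]
    rw [σB_eq n 0 (by omega), psi, PresentedGroup.toGroup.of]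
    simp [tE]
    rfl

lemma phi_psi (hn : 2 ≤ n) : (phi n hn).comp (psi n hn) = MonoidHom.id (B n) := by
  apply PresentedGroup.ext
  intro x
  simp only [MonoidHom.comp_apply, MonoidHom.id_apply]
  rw [psi, PresentedGroup.toGroup.of]
  have hmap : phi n hn (tE (aT n) (sT n) x.val)
      = tE (phi n hn (aT n)) (phi n hn (sT n)) x.val := by
    simp [tE, map_mul, map_inv, map_pow]
  rw [hmap]
  have ha : phi n hn (aT n) = σB n 0 := by rw [phi, aT, PresentedGroup.toGroup.of]; rfl
  have hs : phi n hn (sT n) = dP (σB n) (n-1) := by rw [phi, sT, PresentedGroup.toGroup.of]; rfl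
  rw [ha, hs, tE]
  rw [dP_shiftpow (hcB n) (hbB n) x.val (by omega)]
  rw [mul_inv_cancel_right, σB_eq n x.val x.isLt]


lemma main (n : ℕ) (hn : 1 < n) :
    ∃ e : PresentedGroup (artinTwoGenRels n) ≃* PresentedGroup (braidRels n),
      e (.of true) = PresentedGroup.of ⟨0, by omega⟩ ∧
      e (.of false) =
        (List.ofFn (fun i : Fin (n - 1) => (PresentedGroup.of i : PresentedGroup (braidRels n)))).prod := by
  refine ⟨(phi n hn).toMulEquiv (psi n hn) (psi_phi n hn) (phi_psi n hn), ?_, ?_⟩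
  · show phi n hn (PresentedGroup.of true) = _
    rw [phi, PresentedGroup.toGroup.of]
    show σB n 0 = _
    rw [σB_eq n 0 (by omega)]
  · show phi n hn (PresentedGroup.of false) = _
    rw [phi, PresentedGroup.toGroup.of]
    show dP (σB n) (n-1) = _
    have hfun : (fun i : Fin (n - 1) => (PresentedGroup.of i : PresentedGroup (braidRels n)))
        = fun i : Fin (n-1) => σB n i.val := by
      funext i
      rw [σB_eq n i.val i.isLt]
    rw [hfun, ofFn_prod_eq_dP (σB n) (n-1)]

end ArtinMain

theorem artin_two_generator_presentation_of_braid_group (n : ℕ) (hn : 2 ≤ n) :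
    ∃ e : PresentedGroup (artinTwoGenRels n) ≃* PresentedGroup (braidRels n),
      e (.of true) = PresentedGroup.of ⟨0, by omega⟩ ∧
      e (.of false) =
        (List.ofFn (fun i : Fin (n - 1) => (PresentedGroup.of i : PresentedGroup (braidRels n)))).prod := by
  exact ArtinMain.main n hn
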